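/- Let p be odd, and f(x) = (x^2 + pαx + pβ)(x^2 - pαx + pγ) with α, β, γ ∈ Z_p and p ∤ β, p ∤ γ. Suppose p^k exactly divides α and p^{k+1} | β - γ (Case 2). Then every monic quartic g ∈ Z_p[x] with g ≡ f (mod p^{2k+5}) is reducible in Z_p[x]. -/

import Mathlib

open Polynomial

private theorem dvdh {Rg : Type*} [CommRing Rg] {π x y : Rg} {a b c : ℕ}
    (hx : π^a ∣ x) (hy : π^b ∣ y) (h : c ≤ a + b) : π^c ∣ x * y :=
  dvd_trans (pow_dvd_pow π h) (by rw [pow_add]; exact mul_dvd_mul hx hy)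


private theorem cube_eval {Rg : Type*} [CommRing Rg] (A B Cc z : Rg) :
    (X^3 + C A*X^2 + C B*X - C Cc).eval z = z^3 + A*z^2 + B*z - Cc := by
  simp

private theorem cube_deriv {Rg : Type*} [CommRing Rg] (A B Cc z : Rg) :
    (X^3 + C A*X^2 + C B*X - C Cc).derivative.eval z = 3*z^2 + 2*A*z + B := by
  simp [derivative_sub, derivative_add, derivative_mul]
  ring

private theorem sq_eval {Rg : Type*} [CommRing Rg] (Cc z : Rg) :
    (X^2 - C Cc).eval z = z^2 - Cc := by simp

private theorem sq_deriv {Rg : Type*} [CommRing Rg] (Cc z : Rg) :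
    (X^2 - C Cc).derivative.eval z = 2*z := by
  simp [derivative_sub]
  ring

set_option maxHeartbeats 1600000 in
theorem stmt_16 (p : ℕ) [Fact p.Prime] (hodd : p ≠ 2) (α β γ : ℤ_[p]) (k : ℕ)
    (hβ : ¬ (p : ℤ_[p]) ∣ β) (hγ : ¬ (p : ℤ_[p]) ∣ γ)
    (hα : (p : ℤ_[p]) ^ k ∣ α) (hα' : ¬ (p : ℤ_[p]) ^ (k + 1) ∣ α)
    (hdiff : (p : ℤ_[p]) ^ (k + 1) ∣ (β - γ)) :
    ∀ g : Polynomial ℤ_[p], g.Monic → g.natDegree = 4 →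
      g.map (PadicInt.toZModPow (2 * k + 5)) =
        ((X ^ 2 + C ((p : ℤ_[p]) * α) * X + C ((p : ℤ_[p]) * β)) *
          (X ^ 2 - C ((p : ℤ_[p]) * α) * X + C ((p : ℤ_[p]) * γ))).map
            (PadicInt.toZModPow (2 * k + 5)) →
      ¬ Irreducible g := by
  intro g hmon hdeg hmap
  set π : ℤ_[p] := (p : ℤ_[p]) with hπ
  have hp : p.Prime := Fact.out
  have hπp : Prime π := PadicInt.prime_p
  have hπ0 : π ≠ 0 := hπp.ne_zero
  have hp1 : (1:ℝ) < p := by exact_mod_cast hp.one_lt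
  have hπ2 : ¬ π ∣ (2:ℤ_[p]) := by
    rw [hπ, ← PadicInt.norm_lt_one_iff_dvd,
      show ((2:ℤ_[p])) = ((2:ℤ):ℤ_[p]) by norm_num, PadicInt.norm_int_lt_one_iff_dvd]
    intro h
    have : p ∣ 2 := by exact_mod_cast h
    exact hodd ((Nat.prime_dvd_prime_iff_eq hp Nat.prime_two).mp this)
  have norm_one_of : ∀ x : ℤ_[p], ¬ (π ∣ x) → ‖x‖ = 1 := fun x hx =>
    le_antisymm (PadicInt.norm_le_one x)
      (le_of_not_gt fun h => hx (by rw [hπ]; exact (PadicInt.norm_lt_one_iff_dvd x).mp h))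
  obtain ⟨α₁, hα₁⟩ := hα
  have hα₁u : ¬ π ∣ α₁ := fun ⟨c, hc⟩ => hα' ⟨c, by rw [hα₁, hc]; ring⟩
  obtain ⟨g₁, hg₁⟩ := hdiff
  have hβγu : ¬ π ∣ (β + γ) := by
    intro h
    have h1 : π ∣ π^(k+1)*g₁ := (dvd_pow_self π (Nat.succ_ne_zero k)).mul_right g₁
    have h2 : π ∣ 2*β := by
      have e : (2:ℤ_[p])*β = (β+γ) + π^(k+1)*g₁ := by linear_combination hg₁
      rw [e]; exact dvd_add h h1
    rcases hπp.dvd_mul.mp h2 with h' | h'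
    · exact hπ2 h'
    · exact hβ (by rw [← hπ] at *; exact h')
  -- coefficients of f
  set A2 : ℤ_[p] := π*β + π*γ - π*α*(π*α) with hA2
  set A1 : ℤ_[p] := π*α*(π*γ) - π*α*(π*β) with hA1
  set A0 : ℤ_[p] := (π*β)*(π*γ) with hA0
  have hfpoly : (X^2 + C (π*α)*X + C (π*β)) * (X^2 - C (π*α)*X + C (π*γ))
      = X^4 + C A2*X^2 + C A1*X + C A0 := by
    rw [hA2, hA1, hA0]
    simp only [map_mul, map_add, map_sub]
    ring
  rw [hfpoly] at hmap
  have hcoe : ∀ i, π^(2*k+5) ∣ g.coeff i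
      - (X^4 + C A2*X^2 + C A1*X + C A0 : Polynomial ℤ_[p]).coeff i := by
    intro i
    have h1 : (PadicInt.toZModPow (2*k+5)) (g.coeff i
        - (X^4 + C A2*X^2 + C A1*X + C A0 : Polynomial ℤ_[p]).coeff i) = 0 := by
      rw [map_sub, ← Polynomial.coeff_map, ← Polynomial.coeff_map, hmap, sub_self]
    rw [← RingHom.mem_ker, PadicInt.ker_toZModPow, Ideal.mem_span_singleton] at h1
    rw [hπ]; exact h1
  have d3 : π^(2*k+5) ∣ g.coeff 3 := by have := hcoe 3; simpa [coeff_X_pow] using this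
  have d2 : π^(2*k+5) ∣ g.coeff 2 - A2 := by have := hcoe 2; simpa [coeff_X_pow] using this
  have d1 : π^(2*k+5) ∣ g.coeff 1 - A1 := by have := hcoe 1; simpa [coeff_X_pow] using this
  have d0 : π^(2*k+5) ∣ g.coeff 0 - A0 := by have := hcoe 0; simpa [coeff_X_pow] using this
  -- the unit 2 and derived quantities
  have h2u : IsUnit (2:ℤ_[p]) := PadicInt.isUnit_iff.mpr (norm_one_of 2 hπ2)
  obtain ⟨u2, hu2⟩ := h2u
  set i2 : ℤ_[p] := ((u2⁻¹ : ℤ_[p]ˣ) : ℤ_[p]) with hi2def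
  have h2i : (2:ℤ_[p]) * i2 = 1 := by
    rw [hi2def, ← hu2]; exact_mod_cast u2.mul_inv
  set m : ℤ_[p] := g.coeff 3 * i2 * i2 with hmdef
  set P : ℤ_[p] := g.coeff 2 - 6*m^2 with hPdef
  set Q : ℤ_[p] := g.coeff 1 - 2*(g.coeff 2)*m + 8*m^3 with hQdef
  set R : ℤ_[p] := g.coeff 0 - (g.coeff 1)*m + (g.coeff 2)*m^2 - 3*m^4 with hRdef
  have dm : π^(2*k+5) ∣ m := (d3.mul_right i2).mul_right i2
  have dP : π^(2*k+5) ∣ P - A2 := by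
    have e : P - A2 = (g.coeff 2 - A2) - 6*(m*m) := by rw [hPdef]; ring
    rw [e]; exact dvd_sub d2 ((dm.mul_left m).mul_left 6)
  have dQ : π^(2*k+5) ∣ Q - A1 := by
    have e : Q - A1 = (g.coeff 1 - A1) - (2*g.coeff 2)*m + (8*(m*m))*m := by rw [hQdef]; ring
    rw [e]; exact (dvd_sub d1 (dm.mul_left _)).add (dm.mul_left _)
  have dR : π^(2*k+5) ∣ R - A0 := by
    have e : R - A0 = ((g.coeff 0 - A0) - (g.coeff 1)*m + (g.coeff 2 * m)*m) - (3*(m*m*m))*m := by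
      rw [hRdef]; ring
    rw [e]; exact dvd_sub ((dvd_sub d0 (dm.mul_left _)).add (dm.mul_left _)) (dm.mul_left _)
  set y0 : ℤ_[p] := π^2*α^2 with hy0def
  have hy0' : y0 = π^(2*k+2)*α₁^2 := by rw [hy0def, hα₁]; ring
  have dy0 : π^(2*k+2) ∣ y0 := ⟨α₁^2, hy0'⟩
  have hA1' : A1 = -(π^(2*k+3)*(α₁*g₁)) := by
    rw [hA1, hα₁]; linear_combination (-(π^(k+2))*α₁)*hg₁
  obtain ⟨wQ, hwQ⟩ := dQ
  have hQ3 : Q = π^(2*k+3)*(π^2*wQ - α₁*g₁) := by linear_combination hwQ + hA1'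
  have hQA : π^(2*k+3) ∣ Q + A1 :=
    ⟨π^2*wQ - 2*(α₁*g₁), by linear_combination hQ3 + hA1'⟩
  -- valuation of the resolvent cubic at y0
  have HdvdF : π^(4*k+7) ∣ (y0^3 + 2*P*y0^2 + (P^2-4*R)*y0 - Q^2) := by
    have key : y0^3 + 2*P*y0^2 + (P^2-4*R)*y0 - Q^2
        = (2*y0^2)*(P-A2) + y0*((P-A2)*(P+A2)) - (4*y0)*(R-A0) - (Q-A1)*(Q+A1) := by
      rw [hy0def, hA2, hA1, hA0]; ring
    have hx1 : π^(4*k+4) ∣ 2*y0^2 :=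
      Dvd.dvd.mul_left ⟨α₁^4, by rw [hy0']; ring⟩ 2
    rw [key]
    exact dvd_sub (dvd_sub (dvd_add (dvdh hx1 dP (by omega))
      (dvdh dy0 (dP.mul_right (P+A2)) (by omega))) (dvdh (dy0.mul_left 4) dR (by omega)))
      (dvdh (⟨wQ, hwQ⟩ : π^(2*k+5) ∣ Q - A1) hQA (by omega))
  -- valuation of the derivative of the resolvent cubic at y0
  have hE : π^(2*k+5) ∣ (4*(P-A2)*y0 + (P-A2)*(P+A2) - 4*(R-A0)) :=
    dvd_sub (dvd_add ((dP.mul_left 4).mul_right y0) (dP.mul_right (P+A2))) (dR.mul_left 4)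
  obtain ⟨wD, hwD⟩ := hE
  set U : ℤ_[p] := 2*α₁^2*(β+γ) + π*g₁^2 + π^2*wD with hUdef
  have hDeq : 3*y0^2 + 4*P*y0 + (P^2 - 4*R) = π^(2*k+3) * U := by
    have split : 3*y0^2 + 4*P*y0 + (P^2 - 4*R)
        = (3*y0^2 + 4*A2*y0 + (A2^2 - 4*A0)) + (4*(P-A2)*y0 + (P-A2)*(P+A2) - 4*(R-A0)) := by
      ring
    rw [split, hwD, hUdef]
    have hβe : β = γ + π^(k+1)*g₁ := by linear_combination hg₁
    rw [hy0def, hA2, hA0, hα₁, hβe]; ring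
  have hU : ¬ π ∣ U := by
    intro h
    have h2 : π ∣ π*g₁^2 + π^2*wD :=
      dvd_add (dvd_mul_right π _) ((dvd_pow_self π two_ne_zero).mul_right _)
    have h1 : π ∣ (2*α₁^2)*(β+γ) := by
      have := dvd_sub h h2
      rw [hUdef] at this
      have e : 2*α₁^2*(β+γ) + π*g₁^2 + π^2*wD - (π*g₁^2 + π^2*wD) = (2*α₁^2)*(β+γ) := by ring
      rwa [e] at this
    rcases hπp.dvd_mul.mp h1 with h' | h'
    · rcases hπp.dvd_mul.mp h' with h'' | h''
      · exact hπ2 h''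
      · exact hα₁u (hπp.dvd_of_dvd_pow h'')
    · exact hβγu h'
  -- Hensel's lemma for the resolvent cubic
  have hnormD : ‖(X^3 + C (2*P)*X^2 + C (P^2-4*R)*X - C (Q^2) :
      Polynomial ℤ_[p]).derivative.eval y0‖ = (p:ℝ)^(-((2*k+3:ℕ)):ℤ) := by
    have e : (3:ℤ_[p])*y0^2 + 2*(2*P)*y0 + (P^2-4*R) = π^(2*k+3) * U := by
      rw [← hDeq]; ring
    rw [cube_deriv, e, hπ, norm_mul, PadicInt.norm_p_pow, norm_one_of U hU, mul_one]
  have hlt : ‖(X^3 + C (2*P)*X^2 + C (P^2-4*R)*X - C (Q^2) : Polynomial ℤ_[p]).eval y0‖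
      < ‖(X^3 + C (2*P)*X^2 + C (P^2-4*R)*X - C (Q^2) :
        Polynomial ℤ_[p]).derivative.eval y0‖^2 := by
    rw [hnormD, cube_eval]
    have h1 : ‖y0^3 + 2*P*y0^2 + (P^2-4*R)*y0 - Q^2‖ ≤ (p:ℝ)^(-((4*k+7:ℕ)):ℤ) := by
      refine (PadicInt.norm_le_pow_iff_mem_span_pow _ _).mpr (Ideal.mem_span_singleton.mpr ?_)
      rw [← hπ]; exact HdvdF
    refine lt_of_le_of_lt h1 ?_
    have h2 : (p:ℝ)^(-((4*k+7:ℕ)):ℤ) < (p:ℝ)^(-((4*k+6:ℕ)):ℤ) :=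
      (zpow_lt_zpow_iff_right₀ hp1).mpr (by push_cast; omega)
    refine lt_of_lt_of_le h2 (le_of_eq ?_)
    rw [sq, ← zpow_add₀ (ne_of_gt (by positivity : (0:ℝ) < p))]
    congr 1; push_cast; ring
  obtain ⟨y, hyroot, hyclose, -, -⟩ := hensels_lemma hlt
  have hψy : y^3 + 2*P*y^2 + (P^2-4*R)*y - Q^2 = 0 := by rw [← cube_eval]; exact hyroot
  have hyd : π^(2*k+4) ∣ y - y0 := by
    rw [coe_aeval_eq_eval, hnormD] at hyclose
    have h1 : ‖y - y0‖ ≤ (p:ℝ)^((-((2*k+3:ℕ)):ℤ) - 1) :=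
      (PadicInt.norm_lt_pow_iff_norm_le_pow_sub_one _ _).mp hyclose
    have h2 : ((-((2*k+3:ℕ)):ℤ) - 1) = (-((2*k+4:ℕ)):ℤ) := by push_cast; ring
    rw [h2, PadicInt.norm_le_pow_iff_mem_span_pow] at h1
    rw [hπ]; exact Ideal.mem_span_singleton.mp h1
  obtain ⟨d, hd⟩ := hyd
  -- square root of y
  have hsd : ‖(X^2 - C (α₁^2 + π^2*d) : Polynomial ℤ_[p]).eval α₁‖
      < ‖(X^2 - C (α₁^2 + π^2*d) : Polynomial ℤ_[p]).derivative.eval α₁‖^2 := by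
    rw [sq_eval, sq_deriv]
    have hn2α : ¬ π ∣ 2*α₁ := fun h => (hπp.dvd_mul.mp h).elim hπ2 hα₁u
    rw [norm_one_of _ hn2α, one_pow]
    have e : α₁^2 - (α₁^2 + π^2*d) = -(π^2*d) := by ring
    rw [e, norm_neg]
    have h1 : ‖π^2*d‖ ≤ (p:ℝ)^(-((2:ℕ)):ℤ) := by
      refine (PadicInt.norm_le_pow_iff_mem_span_pow _ _).mpr (Ideal.mem_span_singleton.mpr ?_)
      rw [← hπ]; exact Dvd.intro d rfl
    refine lt_of_le_of_lt h1 ?_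
    have : ((p:ℝ)^(0:ℤ)) = 1 := zpow_zero _
    rw [← this]
    exact (zpow_lt_zpow_iff_right₀ hp1).mpr (by norm_num)
  obtain ⟨s₁, hs₁root, -, -⟩ := hensels_lemma hsd
  have hs₁ : s₁^2 = α₁^2 + π^2*d := by
    have := hs₁root; rw [coe_aeval_eq_eval, sq_eval, sub_eq_zero] at this; exact this
  have hs₁u : ¬ π ∣ s₁ := by
    intro h
    have h2 : π ∣ s₁^2 := (h.mul_left s₁).trans (by rw [sq])
    have e : α₁^2 = s₁^2 - π^2*d := by linear_combination -hs₁
    have h3 : π ∣ α₁^2 := by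
      rw [e]; exact dvd_sub h2 ((dvd_pow_self π two_ne_zero).mul_right d)
    exact hα₁u (hπp.dvd_of_dvd_pow h3)
  set s : ℤ_[p] := π^(k+1)*s₁ with hsdef
  have hs2 : s^2 = y := by
    linear_combination (s + π^(k+1)*s₁)*hsdef + π^(2*k+2)*hs₁ - hy0' - hd
  have hs0 : s ≠ 0 :=
    mul_ne_zero (pow_ne_zero _ hπ0) (fun h => hs₁u (h ▸ dvd_zero π))
  -- s divides Q
  have hs₁unit : IsUnit s₁ := PadicInt.isUnit_iff.mpr (norm_one_of s₁ hs₁u)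
  obtain ⟨u1, hu1⟩ := hs₁unit
  have hsQ : s ∣ Q := by
    have h1 : s₁*((u1⁻¹ : ℤ_[p]ˣ) : ℤ_[p]) = 1 := by rw [← hu1]; exact_mod_cast u1.mul_inv
    exact ⟨π^(k+2)*(π^2*wQ - α₁*g₁)*((u1⁻¹ : ℤ_[p]ˣ) : ℤ_[p]), by
      rw [hQ3, hsdef]
      linear_combination (-(π^(2*k+3))*(π^2*wQ - α₁*g₁))*h1⟩
  obtain ⟨q, hq⟩ := hsQ
  -- the quadratic factor coefficients
  set t : ℤ_[p] := (P + y - q)*i2 with htdef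
  set v : ℤ_[p] := (P + y + q)*i2 with hvdef
  have htv : t + v = P + y := by
    rw [htdef, hvdef]; linear_combination (P+y)*h2i
  have hvt : v - t = q := by
    rw [htdef, hvdef]; linear_combination q*h2i
  have h4tv : 4*(t*v) = (P+y)^2 - q^2 := by
    rw [htdef, hvdef]; linear_combination ((P+y-q)*((P+y)+q)*(2*i2+1))*h2i
  have htv2 : t*v = R := by
    have hyne : y ≠ 0 := by rw [← hs2]; exact pow_ne_zero _ hs0
    have hkey : y*(4*(t*v)) = y*(4*R) := by
      rw [h4tv]
      linear_combination hψy + (Q + s*q)*hq + q^2*hs2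
    have h4 : 4*(t*v) = 4*R := mul_left_cancel₀ hyne hkey
    have h4ne : (4:ℤ_[p]) ≠ 0 := by
      intro h
      have : ((4:ℕ):ℤ_[p]) = 0 := by exact_mod_cast h
      rw [Nat.cast_eq_zero] at this
      omega
    exact mul_left_cancel₀ h4ne h4
  -- the explicit form of g
  have hc4 : g.coeff 4 = 1 := hdeg ▸ hmon.coeff_natDegree
  have hgsum : g = X^4 + C (g.coeff 3) * X^3 + C (g.coeff 2)*X^2
      + C (g.coeff 1)*X + C (g.coeff 0) := by
    have h5 : g.natDegree < 5 := by omega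
    conv_lhs => rw [Polynomial.as_sum_range' g 5 h5]
    simp only [Finset.sum_range_succ, Finset.sum_range_zero, ← C_mul_X_pow_eq_monomial,
      hc4, map_one, one_mul, zero_add, pow_zero, mul_one, pow_one]
    ring
  -- the four coefficient identities
  have e3 : g.coeff 3 = (2*m+s) + (2*m-s) := by
    linear_combination (-(g.coeff 3)*(2*i2+1))*h2i - 4*hmdef
  have e2 : g.coeff 2 = ((m^2+s*m+t) + (m^2-s*m+v)) + (2*m+s)*(2*m-s) := by
    linear_combination -htv - hPdef + hs2
  have e1 : g.coeff 1 = (2*m+s)*(m^2-s*m+v) + (2*m-s)*(m^2+s*m+t) := by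
    linear_combination -hQdef + hq - s*hvt - 2*m*htv + 2*m*hs2 - 2*m*hPdef
  have e0 : g.coeff 0 = (m^2+s*m+t)*(m^2-s*m+v) := by
    linear_combination -htv2 - hRdef - m^2*htv - m*s*hvt + m*hq - m*hQdef + m^2*hs2 - m^2*hPdef
  have hfact : g = (X^2 + C (2*m+s)*X + C (m^2+s*m+t)) * (X^2 + C (2*m-s)*X + C (m^2-s*m+v)) := by
    rw [hgsum, e3, e2, e1, e0]
    simp only [map_add, map_sub, map_mul, map_pow, map_ofNat]
    ring
  -- conclusion
  intro hirr
  have hdq : ∀ a b : ℤ_[p], (X^2 + C a*X + C b : Polynomial ℤ_[p]).natDegree = 2 := by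
    intro a b
    have e : (X^2 + C a*X + C b : Polynomial ℤ_[p]) = C 1*X^2 + C a*X + C b := by
      rw [map_one, one_mul]
    rw [e]; exact natDegree_quadratic one_ne_zero
  rcases hirr.isUnit_or_isUnit hfact with h | h
  · have h0 := natDegree_eq_zero_of_isUnit h
    rw [hdq] at h0; omega
  · have h0 := natDegree_eq_zero_of_isUnit h
    rw [hdq] at h0; omega
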